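/- Let 0 < β₁₂₁ < 1, 0 < β₂₂ < 1 with λ₂ := β₁₂₁/β₂₂ < 1, and let (β_{12j})_{j≥1} satisfy 0 ≤ β_{12j} ≤ β₁₂₁ for all j. Let g_{2,1}, …, g_{2,t} ∈ ℝ^{n×d} with |[g_{2,j}]_{pq}| ≤ G_{2,∞} for all j, p, q, define m_{2,t} = β_{12t} m_{2,t−1} + (1−β_{12t}) g_{2,t} with m_{2,0} = 0, and let v̂_{2,t} ∈ ℝ^{n×d} satisfy, entrywise, v̂_{2,t} ≥ (1−β₂₂) Σ_{j=1}^t β₂₂^{t−j} g_{2,j} ⊙ g_{2,j}. Then ‖(1/⁴√v̂_{2,t}) ⊙ m_{2,t}‖² ≤ n·d·G_{2,∞} / ( (1−β₁₂₁)·√(1−β₂₂)·(1−λ₂) ), where entries with v̂_{2,t} = 0 are interpreted as 0. -/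

import Mathlib

open Finset

private lemma geom_Icc_le (r : ℝ) (hr0 : 0 ≤ r) (hr1 : r < 1) (t : ℕ) :
    ∑ j ∈ Finset.Icc 1 t, r ^ (t - j) ≤ 1 / (1 - r) := by
  have h1 : 0 < 1 - r := by linarith
  induction t with
  | zero => simpa using one_div_nonneg.mpr h1.le
  | succ s ih =>
    rw [Finset.sum_Icc_succ_top (by omega)]
    have heq : ∑ j ∈ Finset.Icc 1 s, r ^ (s + 1 - j) = r * ∑ j ∈ Finset.Icc 1 s, r ^ (s - j) := by
      rw [Finset.mul_sum]
      refine Finset.sum_congr rfl fun j hj => ?_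
      have hj' : 1 ≤ j ∧ j ≤ s := by simpa using hj
      have : s + 1 - j = (s - j) + 1 := by omega
      rw [this, pow_succ]; ring
    rw [heq]
    have h2 := mul_le_mul_of_nonneg_left ih hr0
    simp only [Nat.sub_self, pow_zero]
    have : r * (1 / (1 - r)) + 1 = 1 / (1 - r) := by field_simp; ring
    linarith

/-- Lemma 5, bound (4) of the paper.  With time-varying decay
parameters `0 ≤ β_{12j} ≤ β₁₂₁`, entrywise-bounded gradients `|[g_{2,j}]_{pq}| ≤ G_{2,∞}`,
the recursion `m_{2,t} = β_{12t} m_{2,t−1} + (1−β_{12t}) g_{2,t}` (started at `0`), and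
any `v̂_{2,t}` dominating entrywise the exponential moving average
`(1−β₂₂) Σ_{j=1}^t β₂₂^{t−j} g_{2,j} ⊙ g_{2,j}`, if `λ₂ = β₁₂₁/β₂₂ < 1` then
`‖(1/⁴√v̂_{2,t}) ⊙ m_{2,t}‖² ≤ n·d·G_{2,∞}/((1−β₁₂₁)·√(1−β₂₂)·(1−λ₂))` in the
Frobenius norm, where `⁴√x = √(√x)` entrywise.
(Entries with `v̂_{2,t} = 0` contribute `0`; Lean's division by zero is zero.) -/
theorem dnnAdam_second_layer_fourth_root_bound
    (n d t : ℕ)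
    (β₁₂₁ β₂₂ G2inf : ℝ) (hβ₁ : 0 < β₁₂₁) (hβ₁' : β₁₂₁ < 1) (hβ₂ : 0 < β₂₂) (hβ₂' : β₂₂ < 1)
    (hlam : β₁₂₁ / β₂₂ < 1)
    (β : ℕ → ℝ) (hβ0 : ∀ j, 0 ≤ β j) (hβub : ∀ j, β j ≤ β₁₂₁)
    (g : ℕ → Matrix (Fin n) (Fin d) ℝ)
    (hg : ∀ j, 1 ≤ j → ∀ p q, |g j p q| ≤ G2inf)
    (m : ℕ → Matrix (Fin n) (Fin d) ℝ) (hm0 : ∀ p q, m 0 p q = 0)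
    (hm : ∀ j p q, m (j + 1) p q = β (j + 1) * m j p q + (1 - β (j + 1)) * g (j + 1) p q)
    (vhat : Matrix (Fin n) (Fin d) ℝ)
    (hvhat : ∀ p q,
      (1 - β₂₂) * ∑ j ∈ Finset.Icc 1 t, β₂₂ ^ (t - j) * (g j p q) ^ 2 ≤ vhat p q) :
    ∑ p, ∑ q, (m t p q / Real.sqrt (Real.sqrt (vhat p q))) ^ 2
      ≤ (n : ℝ) * (d : ℝ) * G2inf
          / ((1 - β₁₂₁) * Real.sqrt (1 - β₂₂) * (1 - β₁₂₁ / β₂₂)) := by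
  set lam : ℝ := β₁₂₁ / β₂₂ with hlamdef
  have hlam0 : 0 ≤ lam := div_nonneg hβ₁.le hβ₂.le
  have hb2 : 0 < 1 - β₂₂ := by linarith
  have hsA : 0 < Real.sqrt (1 - β₂₂) := Real.sqrt_pos.mpr hb2
  have hb1 : 0 < 1 - β₁₂₁ := by linarith
  have hl1 : 0 < 1 - lam := by linarith
  have hD : 0 < (1 - β₁₂₁) * Real.sqrt (1 - β₂₂) * (1 - lam) := by positivity
  -- trivial cases: n = 0 or d = 0
  rcases Nat.eq_zero_or_pos n with hn | hn
  · subst hn; simp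
  rcases Nat.eq_zero_or_pos d with hd | hd
  · subst hd; simp
  have hG : 0 ≤ G2inf :=
    (abs_nonneg _).trans (hg 1 le_rfl ⟨0, hn⟩ ⟨0, hd⟩)
  set C : ℝ := G2inf / ((1 - β₁₂₁) * Real.sqrt (1 - β₂₂) * (1 - lam)) with hCdef
  have hC0 : 0 ≤ C := div_nonneg hG hD.le
  have entry : ∀ p q, (m t p q / Real.sqrt (Real.sqrt (vhat p q))) ^ 2 ≤ C := by
    intro p q
    -- bound on |m s p q|
    have key : ∀ s, |m s p q| ≤ ∑ j ∈ Finset.Icc 1 s, β₁₂₁ ^ (s - j) * |g j p q| := by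
      intro s
      induction s with
      | zero => simp [hm0]
      | succ s ih =>
        have hβs := hβ0 (s + 1)
        have hβs' := hβub (s + 1)
        have h1 : |m (s + 1) p q| ≤ β (s + 1) * |m s p q| + (1 - β (s + 1)) * |g (s + 1) p q| := by
          rw [hm s p q]
          calc |β (s + 1) * m s p q + (1 - β (s + 1)) * g (s + 1) p q|
              ≤ |β (s + 1) * m s p q| + |(1 - β (s + 1)) * g (s + 1) p q| := abs_add_le _ _
            _ = β (s + 1) * |m s p q| + (1 - β (s + 1)) * |g (s + 1) p q| := by
                rw [abs_mul, abs_mul, abs_of_nonneg hβs,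
                  abs_of_nonneg (show (0:ℝ) ≤ 1 - β (s + 1) by linarith)]
        have hsum : 0 ≤ ∑ j ∈ Finset.Icc 1 s, β₁₂₁ ^ (s - j) * |g j p q| :=
          Finset.sum_nonneg fun j _ => mul_nonneg (by positivity) (abs_nonneg _)
        have h2 : β (s + 1) * |m s p q| ≤ β₁₂₁ * ∑ j ∈ Finset.Icc 1 s, β₁₂₁ ^ (s - j) * |g j p q| :=
          mul_le_mul hβs' ih (abs_nonneg _) hβ₁.le
        have h3 : (1 - β (s + 1)) * |g (s + 1) p q| ≤ |g (s + 1) p q| := by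
          nlinarith [abs_nonneg (g (s + 1) p q)]
        have hRHS : ∑ j ∈ Finset.Icc 1 (s + 1), β₁₂₁ ^ (s + 1 - j) * |g j p q|
            = β₁₂₁ * (∑ j ∈ Finset.Icc 1 s, β₁₂₁ ^ (s - j) * |g j p q|) + |g (s + 1) p q| := by
          rw [Finset.sum_Icc_succ_top (by omega), Finset.mul_sum, Nat.sub_self, pow_zero, one_mul]
          congr 1
          refine Finset.sum_congr rfl fun j hj => ?_
          have hj' : 1 ≤ j ∧ j ≤ s := by simpa using hj
          have : s + 1 - j = (s - j) + 1 := by omega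
          rw [this, pow_succ]; ring
        rw [hRHS]; linarith
    set v : ℝ := vhat p q with hvdef
    have hv0 : 0 ≤ v := by
      refine le_trans ?_ (hvhat p q)
      exact mul_nonneg hb2.le (Finset.sum_nonneg fun j _ => by positivity)
    rcases hv0.eq_or_lt with hv | hv
    · rw [← hv]; simpa using hC0
    have hsv : 0 < Real.sqrt v := Real.sqrt_pos.mpr hv
    have hrw : (m t p q / Real.sqrt (Real.sqrt v)) ^ 2 = (m t p q) ^ 2 / Real.sqrt v := by
      rw [div_pow, Real.sq_sqrt (Real.sqrt_nonneg v)]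
    rw [hrw]
    -- Cauchy-Schwarz
    set S1 : ℝ := ∑ j ∈ Finset.Icc 1 t, β₁₂₁ ^ (t - j) with hS1
    set S2 : ℝ := ∑ j ∈ Finset.Icc 1 t, β₁₂₁ ^ (t - j) * (g j p q) ^ 2 with hS2
    have hCS : (m t p q) ^ 2 ≤ S1 * S2 := by
      have h1 : (m t p q) ^ 2 ≤ (∑ j ∈ Finset.Icc 1 t, β₁₂₁ ^ (t - j) * |g j p q|) ^ 2 := by
        rw [← sq_abs]
        exact pow_le_pow_left₀ (abs_nonneg _) (key t) 2
      have h2 : (∑ j ∈ Finset.Icc 1 t, β₁₂₁ ^ (t - j) * |g j p q|) ^ 2 ≤ S1 * S2 := by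
        have := Finset.sum_mul_sq_le_sq_mul_sq (Finset.Icc 1 t)
          (fun j => Real.sqrt (β₁₂₁ ^ (t - j)))
          (fun j => Real.sqrt (β₁₂₁ ^ (t - j)) * |g j p q|)
        have hfg : ∀ j, Real.sqrt (β₁₂₁ ^ (t - j)) * (Real.sqrt (β₁₂₁ ^ (t - j)) * |g j p q|)
            = β₁₂₁ ^ (t - j) * |g j p q| := by
          intro j
          rw [← mul_assoc, Real.mul_self_sqrt (by positivity)]
        have hf2 : ∀ j, (Real.sqrt (β₁₂₁ ^ (t - j))) ^ 2 = β₁₂₁ ^ (t - j) := fun j =>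
          Real.sq_sqrt (by positivity)
        have hg2 : ∀ j, (Real.sqrt (β₁₂₁ ^ (t - j)) * |g j p q|) ^ 2
            = β₁₂₁ ^ (t - j) * (g j p q) ^ 2 := by
          intro j
          rw [mul_pow, Real.sq_sqrt (by positivity), sq_abs]
        simp only [hfg, hf2, hg2] at this
        exact this
      exact h1.trans h2
    have hS1le : S1 ≤ 1 / (1 - β₁₂₁) := geom_Icc_le β₁₂₁ hβ₁.le hβ₁' t
    have hS20 : 0 ≤ S2 := Finset.sum_nonneg fun j _ => by positivity
    -- termwise bound of S2 / sqrt v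
    have hterm : ∀ j ∈ Finset.Icc 1 t,
        β₁₂₁ ^ (t - j) * (g j p q) ^ 2 / Real.sqrt v
          ≤ (G2inf / Real.sqrt (1 - β₂₂)) * lam ^ (t - j) := by
      intro j hj
      have hj1 : 1 ≤ j := (Finset.mem_Icc.mp hj).1
      set k : ℕ := t - j with hk
      set a : ℝ := |g j p q| with ha
      have ha0 : 0 ≤ a := abs_nonneg _
      have haG : a ≤ G2inf := hg j hj1 p q
      rw [show (g j p q) ^ 2 = a ^ 2 from (sq_abs (g j p q)).symm]
      rcases ha0.eq_or_lt with h0 | h0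
      · rw [← h0]
        simp only [ne_eq, OfNat.ofNat_ne_zero, not_false_eq_true, zero_pow, mul_zero, zero_div]
        positivity
      -- v ≥ (1-β₂₂) β₂₂^k a²
      have hvge : (1 - β₂₂) * (β₂₂ ^ k * a ^ 2) ≤ v := by
        refine le_trans ?_ (hvhat p q)
        have hsingle : β₂₂ ^ k * (g j p q) ^ 2
            ≤ ∑ i ∈ Finset.Icc 1 t, β₂₂ ^ (t - i) * (g i p q) ^ 2 :=
          Finset.single_le_sum (f := fun i => β₂₂ ^ (t - i) * (g i p q) ^ 2)
            (fun i _ => by positivity) hj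
        rw [sq_abs]
        exact mul_le_mul_of_nonneg_left hsingle hb2.le
      set A : ℝ := Real.sqrt (1 - β₂₂) * (Real.sqrt β₂₂) ^ k * a with hA
      have hA0 : 0 < A := by positivity
      have hAle : A ≤ Real.sqrt v := by
        rw [show Real.sqrt v = Real.sqrt v from rfl]
        have : A ^ 2 ≤ v := by
          have : A ^ 2 = (1 - β₂₂) * (β₂₂ ^ k * a ^ 2) := by
            rw [hA, mul_pow, mul_pow, Real.sq_sqrt hb2.le, ← pow_mul, mul_comm k 2, pow_mul,
              Real.sq_sqrt hβ₂.le]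
            ring
          linarith [hvge]
        exact (Real.le_sqrt hA0.le hv0).mpr this
      have hdiv : β₁₂₁ ^ k * a ^ 2 / Real.sqrt v ≤ β₁₂₁ ^ k * a ^ 2 / A :=
        div_le_div_of_nonneg_left (by positivity) hA0 hAle
      have heq : β₁₂₁ ^ k * a ^ 2 / A
          = (a / Real.sqrt (1 - β₂₂)) * (β₁₂₁ / Real.sqrt β₂₂) ^ k := by
        rw [hA, div_pow]
        field_simp
      have hsb : β₂₂ ≤ Real.sqrt β₂₂ := by
        nlinarith [Real.sq_sqrt hβ₂.le, Real.sqrt_nonneg β₂₂,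
          Real.sqrt_le_sqrt (le_of_lt hβ₂' : β₂₂ ≤ 1), Real.sqrt_one]
      have hsb0 : 0 < Real.sqrt β₂₂ := Real.sqrt_pos.mpr hβ₂
      have hll : β₁₂₁ / Real.sqrt β₂₂ ≤ lam :=
        div_le_div_of_nonneg_left hβ₁.le hβ₂ hsb
      have hfin : (a / Real.sqrt (1 - β₂₂)) * (β₁₂₁ / Real.sqrt β₂₂) ^ k
          ≤ (G2inf / Real.sqrt (1 - β₂₂)) * lam ^ k := by
        refine mul_le_mul ?_ ?_ (by positivity) (by positivity)
        · exact (div_le_div_iff_of_pos_right hsA).mpr haG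
        · exact pow_le_pow_left₀ (by positivity) hll k
      calc β₁₂₁ ^ k * a ^ 2 / Real.sqrt v ≤ β₁₂₁ ^ k * a ^ 2 / A := hdiv
        _ = (a / Real.sqrt (1 - β₂₂)) * (β₁₂₁ / Real.sqrt β₂₂) ^ k := heq
        _ ≤ (G2inf / Real.sqrt (1 - β₂₂)) * lam ^ k := hfin
    have hS2v : S2 / Real.sqrt v ≤ (G2inf / Real.sqrt (1 - β₂₂)) * (1 / (1 - lam)) := by
      rw [hS2, Finset.sum_div]
      calc ∑ j ∈ Finset.Icc 1 t, β₁₂₁ ^ (t - j) * (g j p q) ^ 2 / Real.sqrt v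
          ≤ ∑ j ∈ Finset.Icc 1 t, (G2inf / Real.sqrt (1 - β₂₂)) * lam ^ (t - j) :=
            Finset.sum_le_sum hterm
        _ = (G2inf / Real.sqrt (1 - β₂₂)) * ∑ j ∈ Finset.Icc 1 t, lam ^ (t - j) := by
            rw [Finset.mul_sum]
        _ ≤ (G2inf / Real.sqrt (1 - β₂₂)) * (1 / (1 - lam)) := by
            refine mul_le_mul_of_nonneg_left (geom_Icc_le lam hlam0 (by linarith) t) ?_
            positivity
    have hS2v0 : 0 ≤ S2 / Real.sqrt v := div_nonneg hS20 hsv.le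
    calc (m t p q) ^ 2 / Real.sqrt v ≤ S1 * S2 / Real.sqrt v := by
          gcongr
      _ = S1 * (S2 / Real.sqrt v) := mul_div_assoc _ _ _
      _ ≤ (1 / (1 - β₁₂₁)) * ((G2inf / Real.sqrt (1 - β₂₂)) * (1 / (1 - lam))) := by
          refine mul_le_mul hS1le hS2v hS2v0 ?_
          positivity
      _ = C := by rw [hCdef]; field_simp
  calc ∑ p, ∑ q, (m t p q / Real.sqrt (Real.sqrt (vhat p q))) ^ 2
      ≤ ∑ p : Fin n, ∑ q : Fin d, C :=
        Finset.sum_le_sum fun p _ => Finset.sum_le_sum fun q _ => entry p q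
    _ = (n : ℝ) * (d : ℝ) * C := by
        simp only [Finset.sum_const, Finset.card_univ, Fintype.card_fin, nsmul_eq_mul]
        ring
    _ = (n : ℝ) * (d : ℝ) * G2inf
          / ((1 - β₁₂₁) * Real.sqrt (1 - β₂₂) * (1 - β₁₂₁ / β₂₂)) := by
        rw [hCdef, hlamdef]; ring
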